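/- Let m ≡ 1 (mod 4), write m = 4d + 1, and let ω be a primitive m-th root of unity. Then exactly 2d + 1 of the elements ω^j for j ∈ {0, ..., m-1} have positive real part, and exactly 2d have nonpositive real part. -/

import Mathlib

open Finset Real

lemma image_pow_eq_nthRootsFinset {m : ℕ} (hm : 0 < m) {ω : ℂ}
    (hω : IsPrimitiveRoot ω m) :
    (Finset.range m).image (ω ^ ·) = Polynomial.nthRootsFinset m (1 : ℂ) := by
  apply Finset.eq_of_subset_of_card_le
  · intro z hz
    simp only [Finset.mem_image, Finset.mem_range] at hz
    obtain ⟨j, hj, rfl⟩ := hz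
    rw [Polynomial.mem_nthRootsFinset hm, ← pow_mul, mul_comm, pow_mul, hω.pow_eq_one,
      one_pow]
  · rw [hω.card_nthRootsFinset, Finset.card_image_of_injOn]
    · simp
    · intro i hi j hj hij
      exact hω.pow_inj (Finset.mem_range.1 hi) (Finset.mem_range.1 hj) hij

lemma filter_card_eq {m : ℕ} (hm : 0 < m) {ω : ℂ} (hω : IsPrimitiveRoot ω m)
    (P : ℂ → Prop) [DecidablePred P] :
    ((Finset.range m).filter fun j => P (ω ^ j)).card
      = ((Polynomial.nthRootsFinset m (1 : ℂ)).filter P).card := by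
  rw [← image_pow_eq_nthRootsFinset hm hω, Finset.filter_image,
    Finset.card_image_of_injOn]
  intro i hi j hj hij
  exact hω.pow_inj (Finset.mem_range.1 (Finset.mem_filter.1 hi).1)
    (Finset.mem_range.1 (Finset.mem_filter.1 hj).1) hij

theorem count_m_eq_one_mod_four (d : ℕ) (m : ℕ) (hm : m = 4 * d + 1)
    (ω : ℂ) (hω : IsPrimitiveRoot ω m) :
    ((Finset.range m).filter fun j => 0 < (ω ^ j).re).card = 2 * d + 1 ∧
      ((Finset.range m).filter fun j => (ω ^ j).re ≤ 0).card = 2 * d := by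
  have hm0 : 0 < m := by omega
  have hmne : (m : ℕ) ≠ 0 := hm0.ne'
  set ζ : ℂ := Complex.exp (2 * Real.pi * Complex.I / m) with hζdef
  have hζ : IsPrimitiveRoot ζ m := Complex.isPrimitiveRoot_exp m hmne
  have key : ∀ j < m, (0 < (ζ ^ j).re ↔ (j ≤ d ∨ 3 * d + 1 ≤ j)) := by
    intro j hj
    have hre : (ζ ^ j).re = Real.cos (2 * Real.pi * j / m) := by
      rw [hζdef, ← Complex.exp_nat_mul]
      have : (j : ℂ) * (2 * Real.pi * Complex.I / m)
          = ((2 * Real.pi * j / m : ℝ) : ℂ) * Complex.I := by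
        push_cast; ring
      rw [this, Complex.exp_ofReal_mul_I_re]
    rw [hre]
    have hπ : (0:ℝ) < Real.pi := Real.pi_pos
    have hmr : (0:ℝ) < m := by exact_mod_cast hm0
    constructor
    · intro hcos
      by_contra hcon
      push_neg at hcon
      obtain ⟨h1, h2⟩ := hcon
      have hjm1 : (d + 1 : ℝ) ≤ j := by exact_mod_cast h1
      have hjm2 : (j : ℝ) ≤ 3 * d := by
        have : j ≤ 3 * d := by omega
        exact_mod_cast this
      have hlb : Real.pi / 2 ≤ 2 * Real.pi * j / m := by
        rw [div_le_div_iff₀ (by norm_num) hmr]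
        have : (m : ℝ) = 4 * d + 1 := by exact_mod_cast hm
        rw [this]; nlinarith
      have hub : 2 * Real.pi * j / m ≤ Real.pi + Real.pi / 2 := by
        rw [div_le_iff₀ hmr]
        have : (m : ℝ) = 4 * d + 1 := by exact_mod_cast hm
        rw [this]; nlinarith
      exact absurd (Real.cos_nonpos_of_pi_div_two_le_of_le hlb hub) (not_le.2 hcos)
    · intro h
      rcases h with h | h
      · apply Real.cos_pos_of_mem_Ioo
        constructor
        · have : (0:ℝ) ≤ 2 * Real.pi * j / m := by positivity
          linarith
        · rw [div_lt_iff₀ hmr]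
          have hje : (j : ℝ) ≤ d := by exact_mod_cast h
          have : (m : ℝ) = 4 * d + 1 := by exact_mod_cast hm
          rw [this]; nlinarith
      · have hcos : Real.cos (2 * Real.pi * j / m)
            = Real.cos (2 * Real.pi * j / m - 2 * Real.pi) := by
          rw [Real.cos_sub_two_pi]
        rw [hcos]
        apply Real.cos_pos_of_mem_Ioo
        have hje : (3 * d + 1 : ℝ) ≤ j := by exact_mod_cast h
        have hje2 : (j : ℝ) ≤ 4 * d := by
          have : j ≤ 4 * d := by omega
          exact_mod_cast this
        have hmr' : (m : ℝ) = 4 * d + 1 := by exact_mod_cast hm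
        constructor
        · have h1 : (-(Real.pi/2) + 2*Real.pi) * m < 2 * Real.pi * j := by
            rw [hmr']; nlinarith
          have := (lt_div_iff₀ hmr).2 h1
          linarith
        · have h2 : 2 * Real.pi * j < (Real.pi/2 + 2*Real.pi) * m := by
            rw [hmr']; nlinarith
          have := (div_lt_iff₀ hmr).2 h2
          linarith
  -- count for ζ, then transfer
  have hcount1 : ((Finset.range m).filter fun j => 0 < (ω ^ j).re).card = 2 * d + 1 := by
    rw [filter_card_eq hm0 hω (fun z => 0 < z.re),
      ← filter_card_eq hm0 hζ (fun z => 0 < z.re)]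
    have : (Finset.range m).filter (fun j => 0 < (ζ ^ j).re)
        = (Finset.range m).filter (fun j => j ≤ d ∨ 3 * d + 1 ≤ j) := by
      apply Finset.filter_congr
      intro j hj
      simpa using key j (Finset.mem_range.1 hj)
    rw [this, hm]
    have : (Finset.range (4 * d + 1)).filter (fun j => j ≤ d ∨ 3 * d + 1 ≤ j)
        = Finset.range (d + 1) ∪ Finset.Ico (3 * d + 1) (4 * d + 1) := by
      ext j
      simp only [Finset.mem_filter, Finset.mem_range, Finset.mem_union, Finset.mem_Ico]
      omega
    rw [this, Finset.card_union_of_disjoint]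
    · simp; omega
    · simp only [Finset.disjoint_left, Finset.mem_range, Finset.mem_Ico]
      omega
  refine ⟨hcount1, ?_⟩
  have hsplit : ((Finset.range m).filter fun j => 0 < (ω ^ j).re).card
      + ((Finset.range m).filter fun j => (ω ^ j).re ≤ 0).card = m := by
    have := Finset.card_filter_add_card_filter_not
      (s := Finset.range m) (p := fun j => 0 < (ω ^ j).re)
    simp only [not_lt, Finset.card_range] at this
    exact this
  omega
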